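/- Suppose (G, ψ) has a weighted elimination ordering (v₁, …, v_ℓ), and define θ_k as above. Then for every s with 1 ≤ s ≤ ℓ and every b ∈ ψ(v_s), the polynomial θ_k(x_s − b z) lies in the ideal of K[z, x₁, …, x_ℓ] generated by x_s − b z. -/

import Mathlib

open MvPolynomial

variable {ℓ : ℕ} {K : Type*} [Field K]

/-- `C_{≥k}`: the set containing `k` and all `i > k` reachable from `k` by a path whose
intermediate vertices have strictly increasing indices, all strictly between `k` and `i`. -/
def Cge (G : SimpleGraph (Fin ℓ)) (k : Fin ℓ) : Set (Fin ℓ) :=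
  {i | i = k ∨ (k < i ∧ ∃ l : List (Fin ℓ),
    List.Chain G.Adj k (l ++ [i]) ∧ List.Chain' (· < ·) l ∧ ∀ j ∈ l, k < j ∧ j < i)}

open Classical in
/-- `E_{<k}`: the set of earlier neighbours of `k`. -/
noncomputable def Elt (G : SimpleGraph (Fin ℓ)) (k : Fin ℓ) : Finset (Fin ℓ) :=
  Finset.univ.filter fun j => j < k ∧ G.Adj j k

open Classical in
/-- The derivation `θ_k` of `K[z, x₁, …, x_ℓ]` (variables indexed by `Option (Fin ℓ)`,
with `none` for `z`), given by
`θ_k = Σ_{i ∈ C_{≥k}} (∏_{j ∈ E_{<k}} (x_j − x_i) ∏_{a ∈ ψ(v_k)} (x_i − a z)) ∂/∂x_i`,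
applied to a polynomial `p`. -/
noncomputable def theta (G : SimpleGraph (Fin ℓ)) (ψ : Fin ℓ → Finset K) (k : Fin ℓ)
    (p : MvPolynomial (Option (Fin ℓ)) K) : MvPolynomial (Option (Fin ℓ)) K :=
  ∑ i : Fin ℓ,
    if i ∈ Cge G k then
      ((∏ j ∈ Elt G k, (X (some j) - X (some i))) *
        ∏ a ∈ ψ k, (X (some i) - C a * X none)) * pderiv (some i) p
    else 0

private lemma chain_psi (G : SimpleGraph (Fin ℓ)) (ψ : Fin ℓ → Finset K)
    (hdec : ∀ i j : Fin ℓ, i < j → G.Adj i j → ψ j ⊆ ψ i) :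
    ∀ (l : List (Fin ℓ)) (k i : Fin ℓ), k < i → List.Chain G.Adj k (l ++ [i]) →
      List.Chain' (· < ·) l → (∀ j ∈ l, k < j ∧ j < i) → ψ i ⊆ ψ k := by
  intro l
  induction l with
  | nil =>
    intro k i hki hch _ _
    simp only [List.nil_append, List.chain_cons, List.Chain, List.isChain_cons_cons] at hch
    exact hdec k i hki hch.1
  | cons j l' ih =>
    intro k i hki hch hch' hmem
    simp only [List.cons_append, List.chain_cons, List.Chain, List.isChain_cons_cons] at hch
    have hkj : k < j := (hmem j (by simp)).1
    have hji : j < i := (hmem j (by simp)).2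
    have hpw : List.Pairwise (· < ·) (j :: l') := List.isChain_iff_pairwise.mp hch'
    have h1 : ψ i ⊆ ψ j := by
      refine ih j i hji hch.2 (List.isChain_iff_pairwise.mpr (hpw.sublist (List.sublist_cons_self j l'))) ?_
      intro m hm
      exact ⟨(List.pairwise_cons.mp hpw).1 m hm, (hmem m (by simp [hm])).2⟩
    exact h1.trans (hdec k j hkj hch.1)

theorem stmt12 (G : SimpleGraph (Fin ℓ)) (ψ : Fin ℓ → Finset K)
    (hpeo : ∀ t a b : Fin ℓ, a < t → b < t → a ≠ b → G.Adj a t → G.Adj b t → G.Adj a b)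
    (hdec : ∀ i j : Fin ℓ, i < j → G.Adj i j → ψ j ⊆ ψ i)
    (k s : Fin ℓ) (b : K) (hb : b ∈ ψ s) :
    theta G ψ k (X (some s) - C b * X none) ∈
      Ideal.span ({X (some s) - C b * X none} : Set (MvPolynomial (Option (Fin ℓ)) K)) := by
  classical
  have hder : ∀ i : Fin ℓ,
      pderiv (some i) (X (some s) - C b * X (none : Option (Fin ℓ)) :
        MvPolynomial (Option (Fin ℓ)) K) = if i = s then 1 else 0 := by
    intro i
    rw [map_sub]
    by_cases h : i = s
    · simp [h, pderiv_X, Pi.single_apply]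
    · simp [h, Ne.symm h, pderiv_X, Pi.single_apply]
  rw [theta]
  have hsum : (∑ i : Fin ℓ,
      if i ∈ Cge G k then
        ((∏ j ∈ Elt G k, (X (some j) - X (some i))) *
          ∏ a ∈ ψ k, (X (some i) - C a * X none)) *
            pderiv (some i) (X (some s) - C b * X none : MvPolynomial (Option (Fin ℓ)) K)
      else 0) =
      if s ∈ Cge G k then
        ((∏ j ∈ Elt G k, (X (some j) - X (some s))) *
          ∏ a ∈ ψ k, (X (some s) - C a * X none)) else 0 := by
    rw [Finset.sum_eq_single s]
    · rw [hder s]; simp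
    · intro i _ hi
      rw [hder i]
      simp [hi]
    · intro h; exact absurd (Finset.mem_univ s) h
  rw [hsum]
  by_cases hs : s ∈ Cge G k
  · rw [if_pos hs]
    have hbk : b ∈ ψ k := by
      rcases hs with rfl | ⟨hks, l, hch, hch', hmem⟩
      · exact hb
      · exact chain_psi G ψ hdec l k s hks hch hch' hmem hb
    rw [Ideal.mem_span_singleton]
    exact Dvd.dvd.mul_left
      (Finset.dvd_prod_of_mem (fun a => X (some s) - C a * X none) hbk) _
  · rw [if_neg hs]
    exact Ideal.zero_mem _
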